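/- arXiv:1309.6613 — 7 statements merged into one kernel-verified Lean document; each statement's English description precedes it below -/
import Mathlib

section
/- Along any solution of the dual-decomposition dynamics, the curves z and μ are twice differentiable and the Lyapunov function V(t) = (1/2)‖ż(t)‖² + (1/2)‖μ̇(t)‖² is differentiable with derivative V'(t) = -k_G · f''(z(t))(ż(t), ż(t)) ≤ 0 for every t ∈ ℝ; in particular, V is antitone (monotonically nonincreasing) on ℝ. -/
open Matrix

section AuxLemmas

lemma aux_deriv_nonneg_of_monotone {g : ℝ → ℝ} (hg : Monotone g) {d x : ℝ}
    (h : HasDerivAt g d x) : 0 ≤ d := by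
  have ht := hasDerivAt_iff_tendsto_slope.mp h
  refine ge_of_tendsto ht ?_
  filter_upwards [self_mem_nhdsWithin] with z hz
  have hz' : z ≠ x := hz
  rcases lt_or_gt_of_ne hz' with hlt | hgt
  · rw [slope_def_field]
    apply div_nonneg_of_nonpos
    · simpa using hg hlt.le
    · linarith
  · rw [slope_def_field]
    apply div_nonneg
    · simpa using hg hgt.le
    · linarith

lemma aux_second_deriv_nonneg {F : Type*} [NormedAddCommGroup F] [NormedSpace ℝ F]
    {f : F → ℝ} (hconv : ConvexOn ℝ Set.univ f) (hf : ContDiff ℝ 2 f)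
    (x u : F) : 0 ≤ fderiv ℝ (fderiv ℝ f) x u u := by
  have hfd : Differentiable ℝ f := hf.differentiable (by norm_num)
  have hfd' : Differentiable ℝ (fderiv ℝ f) :=
    (hf.fderiv_right (by norm_num : (1 : WithTop ℕ∞) + 1 ≤ 2)).differentiable one_ne_zero
  set c : ℝ → F := fun s => x + s • u with hc_def
  have hc : ∀ s : ℝ, HasDerivAt c u s := by
    intro s
    have h1 : HasDerivAt (fun s : ℝ => s • u) ((1 : ℝ) • u) s :=
      (hasDerivAt_id s).smul_const u
    simpa [hc_def] using h1.const_add x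
  have hgd : ∀ s : ℝ, HasDerivAt (fun s => f (c s)) (fderiv ℝ f (c s) u) s := by
    intro s
    exact (hfd (c s)).hasFDerivAt.comp_hasDerivAt s (hc s)
  have hcc : ConvexOn ℝ Set.univ (fun s => f (c s)) := by
    have h0 := hconv.comp_affineMap (AffineMap.lineMap x (x + u) : ℝ →ᵃ[ℝ] F)
    rw [Set.preimage_univ] at h0
    have heq : (f ∘ (AffineMap.lineMap x (x + u) : ℝ →ᵃ[ℝ] F)) = fun s => f (c s) := by
      funext s
      simp only [Function.comp_apply, AffineMap.lineMap_apply, hc_def]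
      congr 1
      rw [vsub_eq_sub, vadd_eq_add, add_sub_cancel_left, add_comm]
    rwa [heq] at h0
  have hmono : Monotone (fun s => fderiv ℝ f (c s) u) := by
    have hm := hcc.monotoneOn_deriv (fun s _ => (hgd s).differentiableAt)
    have hde : deriv (fun s => f (c s)) = fun s => fderiv ℝ f (c s) u :=
      funext fun s => (hgd s).deriv
    rw [hde] at hm
    exact monotoneOn_univ.mp hm
  have h2 : HasDerivAt (fun s => fderiv ℝ f (c s) u) (fderiv ℝ (fderiv ℝ f) x u u) 0 := by
    have hc0 : c 0 = x := by simp [hc_def]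
    have hB : HasFDerivAt (fderiv ℝ f) (fderiv ℝ (fderiv ℝ f) x) (c 0) := by
      rw [hc0]; exact (hfd' x).hasFDerivAt
    have h3 : HasDerivAt (fun s => fderiv ℝ f (c s)) (fderiv ℝ (fderiv ℝ f) x u) 0 := by
      have := hB.comp_hasDerivAt 0 (hc 0)
      exact this
    have h4 := h3.clm_apply (hasDerivAt_const (0 : ℝ) u)
    simpa [hc0] using h4
  exact aux_deriv_nonneg_of_monotone hmono h2

lemma aux_eval {V : Type*} [Fintype V] [DecidableEq V] {n : ℕ}
    (L : (V → Fin n → ℝ) →L[ℝ] ℝ) (u : V → Fin n → ℝ) :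
    ∑ i, ∑ k, u i k * L (Pi.single i (Pi.single k 1)) = L u := by
  have h1 : ∀ (i : V) (k : Fin n), u i k * L (Pi.single i (Pi.single k 1))
      = L (u i k • (Pi.single i (Pi.single k 1) : V → Fin n → ℝ)) := fun i k => by
    rw [L.map_smul, smul_eq_mul]
  simp_rw [h1, ← map_sum]
  congr 1
  funext j l
  simp [Finset.sum_apply, Pi.single_apply, ite_apply, mul_ite, mul_one, mul_zero,
    Finset.sum_ite_eq]

lemma aux_double_linear {α β : Type*} [Fintype α] [Fintype β] (c d : ℝ)
    (g h : α → β → ℝ) :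
    ∑ i, ∑ k, (c * g i k + d * h i k)
      = c * (∑ i, ∑ k, g i k) + d * (∑ i, ∑ k, h i k) := by
  simp [Finset.sum_add_distrib, Finset.mul_sum]

lemma aux_half_square {α β : Type*} [Fintype α] [Fintype β] (g h : α → β → ℝ) :
    (1 / 2 : ℝ) * (∑ i, ∑ k, (g i k * h i k + h i k * g i k))
      = ∑ i, ∑ k, h i k * g i k := by
  rw [Finset.mul_sum]
  refine Finset.sum_congr rfl fun i _ => ?_
  rw [Finset.mul_sum]
  exact Finset.sum_congr rfl fun k _ => by ring

end AuxLemmas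

/-- Along any solution of the dual-decomposition dynamics
`ż = -k_G ∇f(z) - k_I' (D μ)`, `μ̇ = k_I' (Dᵀ z)`, the curves `z` and `μ` are twice
differentiable and the Lyapunov function `V(t) = ½‖ż(t)‖² + ½‖μ̇(t)‖²` is differentiable
with `V'(t) = -k_G · f''(z(t))(ż(t), ż(t)) ≤ 0` for all `t`; hence `V` is antitone. -/
theorem dual_decomposition_lyapunov_derivative
    {V E : Type*} [Fintype V] [Fintype E] [Nonempty V] [Nonempty E] [DecidableEq V]
    (G : SimpleGraph V) [DecidableRel G.Adj] (hG : G.Connected)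
    (D : Matrix V E ℝ) (hD : D * Dᵀ = G.lapMatrix ℝ)
    (n : ℕ) (hn : 1 ≤ n)
    (f : (V → Fin n → ℝ) → ℝ)
    (hconv : ConvexOn ℝ Set.univ f) (hf : ContDiff ℝ 2 f)
    (gradf : (V → Fin n → ℝ) → (V → Fin n → ℝ))
    (hgrad : ∀ x u, fderiv ℝ f x u = ∑ i, ∑ k, gradf x i k * u i k)
    (kG kI : ℝ) (hkG : 0 < kG) (hkI : 0 < kI)
    (z : ℝ → (V → Fin n → ℝ)) (μ : ℝ → (E → Fin n → ℝ))
    (hz : Differentiable ℝ z) (hμ : Differentiable ℝ μ)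
    (hzdyn : ∀ t, deriv z t = fun i k =>
      -kG * gradf (z t) i k - kI * ∑ e, D i e * μ t e k)
    (hμdyn : ∀ t, deriv μ t = fun e k => kI * ∑ i, D i e * z t i k) :
    Differentiable ℝ (deriv z) ∧ Differentiable ℝ (deriv μ) ∧
    (∀ t, HasDerivAt
      (fun s => (1 / 2) * (∑ i, ∑ k, deriv z s i k * deriv z s i k)
        + (1 / 2) * (∑ e, ∑ k, deriv μ s e k * deriv μ s e k))
      (-(kG * iteratedFDeriv ℝ 2 f (z t) ![deriv z t, deriv z t])) t) ∧
    (∀ t, -(kG * iteratedFDeriv ℝ 2 f (z t) ![deriv z t, deriv z t]) ≤ 0) ∧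
    Antitone (fun s => (1 / 2) * (∑ i, ∑ k, deriv z s i k * deriv z s i k)
        + (1 / 2) * (∑ e, ∑ k, deriv μ s e k * deriv μ s e k)) := by
  classical
  have hfd : Differentiable ℝ f := hf.differentiable (by norm_num)
  have hfd' : Differentiable ℝ (fderiv ℝ f) :=
    (hf.fderiv_right (by norm_num : (1 : WithTop ℕ∞) + 1 ≤ 2)).differentiable one_ne_zero
  -- identification of the gradient
  have hg : ∀ x i k, gradf x i k = fderiv ℝ f x (Pi.single i (Pi.single k 1)) := by
    intro x i k
    rw [hgrad]
    simp [Pi.single_apply, ite_apply, mul_ite, mul_one, mul_zero, Finset.sum_ite_eq]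
  -- coordinate derivatives of z and μ
  have hzc : ∀ t i k, HasDerivAt (fun s => z s i k) (deriv z t i k) t := fun t i k =>
    hasDerivAt_pi.mp (hasDerivAt_pi.mp (hz t).hasDerivAt i) k
  have hμc : ∀ t e k, HasDerivAt (fun s => μ s e k) (deriv μ t e k) t := fun t e k =>
    hasDerivAt_pi.mp (hasDerivAt_pi.mp (hμ t).hasDerivAt e) k
  -- derivative of s ↦ fderiv f (z s) w
  have hgrad_deriv : ∀ (t : ℝ) (w : V → Fin n → ℝ),
      HasDerivAt (fun s => fderiv ℝ f (z s) w)
        (fderiv ℝ (fderiv ℝ f) (z t) (deriv z t) w) t := by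
    intro t w
    have h3 : HasDerivAt (fun s => fderiv ℝ f (z s))
        (fderiv ℝ (fderiv ℝ f) (z t) (deriv z t)) t := by
      have := (hfd' (z t)).hasFDerivAt.comp_hasDerivAt t (hz t).hasDerivAt
      exact this
    have h4 := h3.clm_apply (hasDerivAt_const t w)
    simpa using h4
  -- second derivatives of the curves, coordinatewise
  have hZ : ∀ t i k, HasDerivAt (fun s => deriv z s i k)
      (-kG * fderiv ℝ (fderiv ℝ f) (z t) (deriv z t) (Pi.single i (Pi.single k 1))
        - kI * ∑ e, D i e * deriv μ t e k) t := by
    intro t i k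
    have heq : (fun s => deriv z s i k)
        = fun s => -kG * fderiv ℝ f (z s) (Pi.single i (Pi.single k 1))
          - kI * ∑ e, D i e * μ s e k := by
      funext s
      simp only [hzdyn, hg]
    rw [heq]
    exact (HasDerivAt.const_mul (-kG) (hgrad_deriv t (Pi.single i (Pi.single k 1)))).sub
      (HasDerivAt.const_mul kI
        (HasDerivAt.fun_sum fun e _ => HasDerivAt.const_mul (D i e) (hμc t e k)))
  have hM : ∀ t e k, HasDerivAt (fun s => deriv μ s e k)
      (kI * ∑ i, D i e * deriv z t i k) t := by
    intro t e k
    have heq : (fun s => deriv μ s e k) = fun s => kI * ∑ i, D i e * z s i k := by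
      funext s
      simp only [hμdyn]
    rw [heq]
    exact HasDerivAt.const_mul kI
      (HasDerivAt.fun_sum fun i _ => HasDerivAt.const_mul (D i e) (hzc t i k))
  -- differentiability of deriv z and deriv μ
  have hdz : Differentiable ℝ (deriv z) := by
    rw [differentiable_pi]
    intro i
    rw [differentiable_pi]
    exact fun k t => (hZ t i k).differentiableAt
  have hdμ : Differentiable ℝ (deriv μ) := by
    rw [differentiable_pi]
    intro e
    rw [differentiable_pi]
    exact fun k t => (hM t e k).differentiableAt
  -- the Lyapunov derivative
  have hWt : ∀ t, HasDerivAt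
      (fun s => (1 / 2) * (∑ i, ∑ k, deriv z s i k * deriv z s i k)
        + (1 / 2) * (∑ e, ∑ k, deriv μ s e k * deriv μ s e k))
      ((1 / 2 : ℝ) * (∑ i, ∑ k,
          ((-kG * fderiv ℝ (fderiv ℝ f) (z t) (deriv z t) (Pi.single i (Pi.single k 1))
            - kI * ∑ e, D i e * deriv μ t e k) * deriv z t i k
          + deriv z t i k *
            (-kG * fderiv ℝ (fderiv ℝ f) (z t) (deriv z t) (Pi.single i (Pi.single k 1))
            - kI * ∑ e, D i e * deriv μ t e k)))
        + (1 / 2 : ℝ) * (∑ e, ∑ k,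
          ((kI * ∑ i, D i e * deriv z t i k) * deriv μ t e k
          + deriv μ t e k * (kI * ∑ i, D i e * deriv z t i k)))) t := by
    intro t
    exact (HasDerivAt.const_mul (1 / 2 : ℝ)
        (HasDerivAt.fun_sum fun i _ => HasDerivAt.fun_sum fun k _ => (hZ t i k).mul (hZ t i k))).add
      (HasDerivAt.const_mul (1 / 2 : ℝ)
        (HasDerivAt.fun_sum fun e _ => HasDerivAt.fun_sum fun k _ => (hM t e k).mul (hM t e k)))
  -- the value of the Lyapunov derivative
  have hval : ∀ t, ((1 / 2 : ℝ) * (∑ i, ∑ k,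
          ((-kG * fderiv ℝ (fderiv ℝ f) (z t) (deriv z t) (Pi.single i (Pi.single k 1))
            - kI * ∑ e, D i e * deriv μ t e k) * deriv z t i k
          + deriv z t i k *
            (-kG * fderiv ℝ (fderiv ℝ f) (z t) (deriv z t) (Pi.single i (Pi.single k 1))
            - kI * ∑ e, D i e * deriv μ t e k)))
        + (1 / 2 : ℝ) * (∑ e, ∑ k,
          ((kI * ∑ i, D i e * deriv z t i k) * deriv μ t e k
          + deriv μ t e k * (kI * ∑ i, D i e * deriv z t i k))))
      = -(kG * iteratedFDeriv ℝ 2 f (z t) ![deriv z t, deriv z t]) := by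
    intro t
    rw [iteratedFDeriv_two_apply]
    simp only [Matrix.cons_val_zero, Matrix.cons_val_one, Matrix.head_cons]
    rw [aux_half_square, aux_half_square]
    have step1 : ∑ i, ∑ k, deriv z t i k *
        (-kG * fderiv ℝ (fderiv ℝ f) (z t) (deriv z t) (Pi.single i (Pi.single k 1))
          - kI * ∑ e, D i e * deriv μ t e k)
        = (-kG) * (∑ i, ∑ k, deriv z t i k *
            fderiv ℝ (fderiv ℝ f) (z t) (deriv z t) (Pi.single i (Pi.single k 1)))
          + (-kI) * (∑ i, ∑ k, deriv z t i k * ∑ e, D i e * deriv μ t e k) := by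
      rw [← aux_double_linear]
      refine Finset.sum_congr rfl fun i _ => Finset.sum_congr rfl fun k _ => by ring
    have step2 : ∑ e, ∑ k, deriv μ t e k * (kI * ∑ i, D i e * deriv z t i k)
        = kI * (∑ e, ∑ k, deriv μ t e k * ∑ i, D i e * deriv z t i k) := by
      rw [Finset.mul_sum]
      refine Finset.sum_congr rfl fun e _ => ?_
      rw [Finset.mul_sum]
      exact Finset.sum_congr rfl fun k _ => by ring
    rw [step1, step2]
    have cross : (∑ i, ∑ k, deriv z t i k * ∑ e, D i e * deriv μ t e k)
        = ∑ e, ∑ k, deriv μ t e k * ∑ i, D i e * deriv z t i k := by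
      simp_rw [Finset.mul_sum]
      calc ∑ i, ∑ k, ∑ e, deriv z t i k * (D i e * deriv μ t e k)
          = ∑ i, ∑ e, ∑ k, deriv z t i k * (D i e * deriv μ t e k) :=
            Finset.sum_congr rfl fun i _ => Finset.sum_comm
        _ = ∑ e, ∑ i, ∑ k, deriv z t i k * (D i e * deriv μ t e k) := Finset.sum_comm
        _ = ∑ e, ∑ k, ∑ i, deriv z t i k * (D i e * deriv μ t e k) :=
            Finset.sum_congr rfl fun e _ => Finset.sum_comm
        _ = ∑ e, ∑ k, ∑ i, deriv μ t e k * (D i e * deriv z t i k) :=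
            Finset.sum_congr rfl fun e _ => Finset.sum_congr rfl fun k _ =>
              Finset.sum_congr rfl fun i _ => by ring
    rw [cross, aux_eval]
    ring
  have hVd : ∀ t, HasDerivAt
      (fun s => (1 / 2) * (∑ i, ∑ k, deriv z s i k * deriv z s i k)
        + (1 / 2) * (∑ e, ∑ k, deriv μ s e k * deriv μ s e k))
      (-(kG * iteratedFDeriv ℝ 2 f (z t) ![deriv z t, deriv z t])) t := by
    intro t
    have := hWt t
    rwa [hval t] at this
  have hnonpos : ∀ t, -(kG * iteratedFDeriv ℝ 2 f (z t) ![deriv z t, deriv z t]) ≤ 0 := by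
    intro t
    have h0 : 0 ≤ fderiv ℝ (fderiv ℝ f) (z t) (deriv z t) (deriv z t) :=
      aux_second_deriv_nonneg hconv hf (z t) (deriv z t)
    rw [iteratedFDeriv_two_apply]
    simp only [Matrix.cons_val_zero, Matrix.cons_val_one, Matrix.head_cons]
    have := mul_nonneg hkG.le h0
    linarith
  refine ⟨hdz, hdμ, hVd, hnonpos, ?_⟩
  refine antitone_of_deriv_nonpos (fun t => (hVd t).differentiableAt) fun t => ?_
  rw [(hVd t).deriv]
  exact hnonpos t
end

section
/- If (z, μ) is a solution of the dual-decomposition dynamics such that ż(t) = 0 for all t ∈ ℝ, then for every t ∈ ℝ the state z(t) is a consensus state (z(t) i = z(t) j for all i, j : V) and μ̇(t) = 0. (Hence the only trajectory remaining in the set {(ż, μ̇) : ż = 0} is the equilibrium (ż, μ̇) = (0, 0).) -/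
open Matrix

/-- If `(z, μ)` is a solution of the dual-decomposition dynamics with
`ż(t) = 0` for all `t`, then for every `t` the state `z(t)` is a consensus state and
`μ̇(t) = 0`; hence the only trajectory remaining in `{(ż, μ̇) : ż = 0}` is the
equilibrium `(ż, μ̇) = (0, 0)`. -/
theorem dual_decomposition_invariant_set
    {V E : Type*} [Fintype V] [Fintype E] [Nonempty V] [Nonempty E] [DecidableEq V]
    (G : SimpleGraph V) [DecidableRel G.Adj] (hG : G.Connected)
    (D : Matrix V E ℝ) (hD : D * Dᵀ = G.lapMatrix ℝ)
    (n : ℕ) (hn : 1 ≤ n)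
    (f : (V → Fin n → ℝ) → ℝ)
    (hconv : ConvexOn ℝ Set.univ f) (hf : ContDiff ℝ 2 f)
    (gradf : (V → Fin n → ℝ) → (V → Fin n → ℝ))
    (hgrad : ∀ x u, fderiv ℝ f x u = ∑ i, ∑ k, gradf x i k * u i k)
    (kG kI : ℝ) (hkG : 0 < kG) (hkI : 0 < kI)
    (z : ℝ → (V → Fin n → ℝ)) (μ : ℝ → (E → Fin n → ℝ))
    (hz : Differentiable ℝ z) (hμ : Differentiable ℝ μ)
    (hzdyn : ∀ t, deriv z t = fun i k =>
      -kG * gradf (z t) i k - kI * ∑ e, D i e * μ t e k)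
    (hμdyn : ∀ t, deriv μ t = fun e k => kI * ∑ i, D i e * z t i k)
    (hzdot : ∀ t, deriv z t = 0) :
    ∀ t, (∀ i j, z t i = z t j) ∧ deriv μ t = 0 := by
  -- z is constant
  have hzc : ∀ s t : ℝ, z s = z t := is_const_of_deriv_eq_zero hz hzdot
  -- the constant value of μ̇
  set c : E → Fin n → ℝ := fun e k => kI * ∑ i, D i e * z 0 i k with hc
  have hμderiv : ∀ t, deriv μ t = c := by
    intro t
    rw [hμdyn t]
    funext e k
    rw [hzc t 0]
  -- μ t = μ 0 + t • c
  have hg : ∀ t : ℝ, HasDerivAt (fun s => μ s - s • c) 0 t := by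
    intro t
    have h1 : HasDerivAt μ c t := by
      have := (hμ t).hasDerivAt
      rwa [hμderiv t] at this
    have h2 : HasDerivAt (fun s : ℝ => s • c) ((1 : ℝ) • c) t :=
      (hasDerivAt_id t).smul_const c
    have := h1.sub h2
    rw [one_smul, sub_self c] at this
    exact this
  have hgc : μ 0 - (0 : ℝ) • c = μ 1 - (1 : ℝ) • c :=
    is_const_of_deriv_eq_zero (fun t => (hg t).differentiableAt)
      (fun t => (hg t).deriv) 0 1
  have hμ1 : μ 1 - μ 0 = c := by
    simp only [zero_smul, one_smul, sub_zero] at hgc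
    rw [hgc]; abel
  -- from ż = 0 at times 0 and 1, D c = 0
  have hDc : ∀ i k, ∑ e, D i e * c e k = 0 := by
    intro i k
    have h0 := (hzdot 0).symm.trans (hzdyn 0)
    have h1 := (hzdot 1).symm.trans (hzdyn 1)
    have e0 := congrFun (congrFun h0 i) k
    have e1 := congrFun (congrFun h1 i) k
    rw [hzc 1 0] at e1
    simp only [Pi.zero_apply] at e0 e1
    have : kI * ∑ e, D i e * μ 0 e k = kI * ∑ e, D i e * μ 1 e k := by
      linarith
    have hsum : ∑ e, D i e * (μ 1 e k - μ 0 e k) = 0 := by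
      have hk := mul_left_cancel₀ (ne_of_gt hkI) this
      simp only [mul_sub]
      rw [Finset.sum_sub_distrib, hk, sub_self]
    calc ∑ e, D i e * c e k = ∑ e, D i e * (μ 1 e k - μ 0 e k) := by
          refine Finset.sum_congr rfl fun e _ => ?_
          rw [← hμ1]; rfl
      _ = 0 := hsum
  -- Laplacian kills each component of z 0
  have hLz : ∀ k : Fin n, (G.lapMatrix ℝ) *ᵥ (fun j => z 0 j k) = 0 := by
    intro k
    set x : V → ℝ := fun j => z 0 j k with hx
    have hcvec : (fun e => c e k) = kI • (Dᵀ *ᵥ x) := by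
      funext e
      simp [hc, mulVec, dotProduct, transpose_apply, hx]
    have hDcv : D *ᵥ (fun e => c e k) = 0 := by
      funext i
      exact hDc i k
    rw [hcvec, mulVec_smul, mulVec_mulVec, hD] at hDcv
    have := smul_eq_zero.mp hDcv
    rcases this with h | h
    · exact absurd h (ne_of_gt hkI)
    · exact h
  -- z 0 is a consensus state
  have hcons0 : ∀ i j, z 0 i = z 0 j := by
    intro i j
    funext k
    have hre := (G.lapMatrix_mulVec_eq_zero_iff_forall_reachable
      (x := fun j => z 0 j k)).mp ?_ i j (hG.preconnected i j)
    · exact hre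
    · exact hLz k
  -- Dᵀ (z 0) = 0, hence c = 0
  have hDTz : ∀ k e, ∑ i, D i e * z 0 i k = 0 := by
    intro k
    set x : V → ℝ := fun j => z 0 j k with hx
    have hsq : ∑ e, (∑ i, D i e * x i) ^ 2 = 0 := by
      have : (Dᵀ *ᵥ x) ⬝ᵥ (Dᵀ *ᵥ x) = 0 := by
        rw [dotProduct_mulVec, vecMul_transpose, mulVec_mulVec, hD, hLz k,
          dotProduct_comm]
        simp
      calc ∑ e, (∑ i, D i e * x i) ^ 2
          = (Dᵀ *ᵥ x) ⬝ᵥ (Dᵀ *ᵥ x) := by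
            simp [dotProduct, mulVec, transpose_apply, sq]
        _ = 0 := this
    intro e
    have h := (Finset.sum_eq_zero_iff_of_nonneg
      (fun e _ => sq_nonneg (∑ i, D i e * x i))).mp hsq e (Finset.mem_univ e)
    exact pow_eq_zero_iff (n := 2) (by norm_num) |>.mp h
  have hc0 : c = 0 := by
    funext e k
    simp [hc, hDTz k e]
  -- conclude
  intro t
  refine ⟨fun i j => ?_, ?_⟩
  · rw [hzc t 0]; exact hcons0 i j
  · rw [hμderiv t, hc0]
end

section
/- Every equilibrium of the dual-decomposition dynamics is a global minimum of the constrained problem: if z* : V → (Fin n → ℝ) and μ* : E → (Fin n → ℝ) satisfy k_G ∇f(z*) + k_I' (D μ*) = 0 and Dᵀ z* = 0, then z* is a consensus state and f(z*) ≤ f(z) for every consensus state z : V → (Fin n → ℝ). -/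
open Matrix


lemma convex_grad_ineq {F : Type*} [NormedAddCommGroup F] [NormedSpace ℝ F]
    {f : F → ℝ} (hconv : ConvexOn ℝ Set.univ f) (hdiff : Differentiable ℝ f) (x y : F) :
    fderiv ℝ f x (y - x) ≤ f y - f x := by
  set g : ℝ → ℝ := fun t => f (x + t • (y - x)) with hgdef
  have hg : HasDerivAt g (fderiv ℝ f x (y - x)) 0 := by
    have h1 : HasDerivAt (fun t : ℝ => x + t • (y - x)) (y - x) 0 := by
      simpa using ((hasDerivAt_id (0:ℝ)).smul_const (y - x)).const_add x
    have := ((hdiff (x + (0:ℝ) • (y - x))).hasFDerivAt.comp_hasDerivAt 0 h1)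
    simpa [hgdef, Function.comp_def] using this
  have hgc : ConvexOn ℝ Set.univ g := by
    have := hconv.comp_affineMap (AffineMap.lineMap x y : ℝ →ᵃ[ℝ] F)
    simp only [Set.preimage_univ] at this
    have hgeq : g = f ∘ AffineMap.lineMap x y := by
      ext t
      simp [hgdef, AffineMap.lineMap_apply, Function.comp]
      rw [add_comm]
    rw [hgeq]; exact this
  have h := hgc.le_slope_of_hasDerivAt (Set.mem_univ (0:ℝ)) (Set.mem_univ 1) one_pos hg
  have hs : slope g 0 1 = f y - f x := by
    simp [slope_def_field, hgdef]
  linarith [hs ▸ h]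

lemma consensus_iff_of_lap {V E : Type*} [Fintype V] [Fintype E] [DecidableEq V]
    (G : SimpleGraph V) [DecidableRel G.Adj] (hG : G.Connected)
    (D : Matrix V E ℝ) (hD : D * Dᵀ = G.lapMatrix ℝ) (x : V → ℝ) :
    (∀ e, ∑ i, D i e * x i = 0) ↔ ∀ i j, x i = x j := by
  have key : Matrix.toLinearMap₂' ℝ (G.lapMatrix ℝ) x x = ∑ e, (∑ i, D i e * x i) ^ 2 := by
    rw [Matrix.toLinearMap₂'_apply', ← hD, ← Matrix.mulVec_mulVec, Matrix.dotProduct_mulVec,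
      ← Matrix.mulVec_transpose]
    simp [dotProduct, Matrix.mulVec, Matrix.transpose_apply, sq]
  constructor
  · intro h i j
    have h0 : Matrix.toLinearMap₂' ℝ (G.lapMatrix ℝ) x x = 0 := by
      rw [key]; exact Finset.sum_eq_zero fun e _ => by rw [h e, zero_pow two_ne_zero]
    exact (G.lapMatrix_toLinearMap₂'_apply'_eq_zero_iff_forall_reachable x).mp h0 i j
      (hG.preconnected i j)
  · intro h e
    have h0 : Matrix.toLinearMap₂' ℝ (G.lapMatrix ℝ) x x = 0 :=
      (SimpleGraph.lapMatrix_toLinearMap₂'_apply'_eq_zero_iff_forall_adj ℝ G x).mpr fun i j _ => h i j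
    rw [key] at h0
    have := (Finset.sum_eq_zero_iff_of_nonneg (fun e _ => sq_nonneg _)).mp h0 e (Finset.mem_univ e)
    exact pow_eq_zero_iff two_ne_zero |>.mp this

/-- Every equilibrium of the dual-decomposition dynamics is a global
minimum of the consensus-constrained problem: if `k_G ∇f(z*) + k_I' (D μ*) = 0` and
`Dᵀ z* = 0`, then `z*` is a consensus state and `f(z*) ≤ f(z)` for every consensus
state `z`. -/
theorem dual_decomposition_equilibrium_is_global_min
    {V E : Type*} [Fintype V] [Fintype E] [Nonempty V] [Nonempty E] [DecidableEq V]
    (G : SimpleGraph V) [DecidableRel G.Adj] (hG : G.Connected)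
    (D : Matrix V E ℝ) (hD : D * Dᵀ = G.lapMatrix ℝ)
    (n : ℕ) (hn : 1 ≤ n)
    (f : (V → Fin n → ℝ) → ℝ)
    (hconv : ConvexOn ℝ Set.univ f) (hdiff : Differentiable ℝ f)
    (gradf : (V → Fin n → ℝ) → (V → Fin n → ℝ))
    (hgrad : ∀ x u, fderiv ℝ f x u = ∑ i, ∑ k, gradf x i k * u i k)
    (kG kI : ℝ) (hkG : 0 < kG) (hkI : 0 < kI)
    (zs : V → Fin n → ℝ) (μs : E → Fin n → ℝ)
    (hstat : (fun i k => kG * gradf zs i k + kI * ∑ e, D i e * μs e k)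
      = (0 : V → Fin n → ℝ))
    (hcons : (fun e k => ∑ i, D i e * zs i k) = (0 : E → Fin n → ℝ)) :
    (∀ i j, zs i = zs j) ∧
    ∀ z : V → Fin n → ℝ, (∀ i j, z i = z j) → f zs ≤ f z := by
  have hcons' : ∀ e k, ∑ i, D i e * zs i k = 0 := fun e k => congrFun (congrFun hcons e) k
  have hzsc : ∀ i j, zs i = zs j := by
    intro i j
    funext k
    exact (consensus_iff_of_lap G hG D hD (fun i => zs i k)).mp (fun e => hcons' e k) i j
  refine ⟨hzsc, fun z hz => ?_⟩
  have hzk : ∀ k e, ∑ i, D i e * z i k = 0 := fun k =>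
    (consensus_iff_of_lap G hG D hD (fun i => z i k)).mpr fun i j => congrFun (hz i j) k
  have hgz : ∀ i k, gradf zs i k = -(kI / kG) * ∑ e, D i e * μs e k := by
    intro i k
    have h := congrFun (congrFun hstat i) k
    simp only [Pi.zero_apply] at h
    field_simp
    linarith
  have hS : fderiv ℝ f zs (z - zs) = 0 := by
    rw [hgrad]
    have h1 : ∀ i k, gradf zs i k * (z - zs) i k
        = ∑ e, (-(kI / kG)) * (μs e k * (D i e * z i k) - μs e k * (D i e * zs i k)) := by
      intro i k
      have hd : (z - zs) i k = z i k - zs i k := rfl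
      rw [hd, hgz i k, ← Finset.mul_sum, mul_assoc]
      congr 1
      rw [Finset.sum_mul]
      exact Finset.sum_congr rfl fun e _ => by ring
    simp_rw [h1]
    rw [Finset.sum_comm]
    refine Finset.sum_eq_zero fun k _ => ?_
    rw [Finset.sum_comm]
    refine Finset.sum_eq_zero fun e _ => ?_
    simp_rw [← Finset.mul_sum, Finset.sum_sub_distrib, ← Finset.mul_sum, hzk k e, hcons' e k]
    simp
  have := convex_grad_ineq hconv hdiff zs z
  rw [hS] at this
  linarith
end

section
/- If (z, μ) is a solution of the PI distributed-optimization dynamics such that ż(t) = 0 for all t ∈ ℝ, then for every t ∈ ℝ the state z(t) is a consensus state (z(t) i = z(t) j for all i, j : V) and μ̇(t) = 0. (Hence the only trajectory remaining in the set {(ż, μ̇) : ż = 0} is the equilibrium (ż, μ̇) = (0, 0).) -/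
open Matrix

private lemma quadAux {V E : Type*} [Fintype V] [Fintype E] (D : Matrix V E ℝ) (w : V → ℝ)
    (h : (D * Dᵀ) *ᵥ w = 0) : Dᵀ *ᵥ w = 0 := by
  have h2 : (Dᵀ *ᵥ w) ⬝ᵥ (Dᵀ *ᵥ w) = 0 := by
    have h0 : w ⬝ᵥ ((D * Dᵀ) *ᵥ w) = 0 := by rw [h]; simp
    rwa [← mulVec_mulVec, dotProduct_mulVec w D, ← mulVec_transpose] at h0
  exact dotProduct_self_eq_zero.mp h2

/-- If `(z, μ)` is a solution of the PI distributed-optimization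
dynamics with `ż(t) = 0` for all `t`, then for every `t` the state `z(t)` is a
consensus state and `μ̇(t) = 0`; hence the only trajectory remaining in
`{(ż, μ̇) : ż = 0}` is the equilibrium `(ż, μ̇) = (0, 0)`. -/
theorem pi_distributed_optimization_invariant_set
    {V E : Type*} [Fintype V] [Fintype E] [Nonempty V] [Nonempty E] [DecidableEq V]
    (G : SimpleGraph V) [DecidableRel G.Adj] (hG : G.Connected)
    (D : Matrix V E ℝ) (hD : D * Dᵀ = G.lapMatrix ℝ)
    (n : ℕ) (hn : 1 ≤ n)
    (f : (V → Fin n → ℝ) → ℝ)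
    (hconv : ConvexOn ℝ Set.univ f) (hf : ContDiff ℝ 2 f)
    (gradf : (V → Fin n → ℝ) → (V → Fin n → ℝ))
    (hgrad : ∀ x u, fderiv ℝ f x u = ∑ i, ∑ k, gradf x i k * u i k)
    (kG kP kI : ℝ) (hkG : 0 < kG) (hkP : 0 < kP) (hkI : 0 < kI)
    (z : ℝ → (V → Fin n → ℝ)) (μ : ℝ → (E → Fin n → ℝ))
    (hz : Differentiable ℝ z) (hμ : Differentiable ℝ μ)
    (hzdyn : ∀ t, deriv z t = fun i k =>
      -kG * gradf (z t) i k - kP * (∑ j, G.lapMatrix ℝ i j * z t j k)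
        - kI * ∑ e, D i e * μ t e k)
    (hμdyn : ∀ t, deriv μ t = fun e k => kI * ∑ i, D i e * z t i k)
    (hzdot : ∀ t, deriv z t = 0) :
    ∀ t, (∀ i j, z t i = z t j) ∧ deriv μ t = 0 := by
  -- z is constant
  have hzc : ∀ s t, z s = z t := by
    apply is_const_of_fderiv_eq_zero hz
    intro x
    have h : HasDerivAt z 0 x := by
      have := (hz x).hasDerivAt
      rwa [hzdot x] at this
    rw [h.hasFDerivAt.fderiv]
    ext v
    simp
  -- derivative of each component of μ
  have hμek : ∀ (e : E) (k : Fin n) (s : ℝ),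
      HasDerivAt (fun s => μ s e k) (kI * ∑ i, D i e * z s i k) s := by
    intro e k s
    have h := (hμ s).hasDerivAt
    rw [hμdyn s] at h
    exact hasDerivAt_pi.mp (hasDerivAt_pi.mp h e) k
  intro t
  -- the integral feedback term D μ is constant along the trajectory
  have hgconst : ∀ (i : V) (k : Fin n) (s : ℝ),
      ∑ e, D i e * μ s e k = ∑ e, D i e * μ t e k := by
    intro i k s
    have heq : ∀ u : ℝ, kI * ∑ e, D i e * μ u e k =
        -kG * gradf (z t) i k - kP * (∑ j, G.lapMatrix ℝ i j * z t j k) := by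
      intro u
      have h0 := congrFun (congrFun ((hzdot u).symm.trans (hzdyn u)) i) k
      rw [hzc u t] at h0
      simp only [Pi.zero_apply] at h0
      linarith
    have := (heq s).trans (heq t).symm
    exact mul_left_cancel₀ hkI.ne' this
  -- hence (L z)(t) = 0
  have hL : ∀ (k : Fin n), (G.lapMatrix ℝ) *ᵥ (fun j => z t j k) = 0 := by
    intro k
    funext i
    -- the function s ↦ ∑ e, D i e * μ s e k is constant, so its derivative vanishes
    have hconstd : HasDerivAt (fun s => ∑ e, D i e * μ s e k) 0 t := by
      have : (fun s => ∑ e, D i e * μ s e k) = fun _ => ∑ e, D i e * μ t e k := by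
        funext s; exact hgconst i k s
      rw [this]
      exact hasDerivAt_const t _
    have hder : HasDerivAt (fun s => ∑ e, D i e * μ s e k)
        (∑ e, D i e * (kI * ∑ j, D j e * z t j k)) t :=
      HasDerivAt.fun_sum fun e _ => (hμek e k t).const_mul (D i e)
    have h0 : ∑ e, D i e * (kI * ∑ j, D j e * z t j k) = 0 :=
      hder.unique hconstd
    have hre : ∑ e, D i e * (kI * ∑ j, D j e * z t j k) =
        kI * ∑ j, (D * Dᵀ) i j * z t j k := by
      simp only [mul_apply, transpose_apply, Finset.mul_sum, Finset.sum_mul]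
      rw [Finset.sum_comm]
      congr 1; funext e; congr 1; funext j; ring
    rw [hre, hD] at h0
    have : ∑ j, G.lapMatrix ℝ i j * z t j k = 0 := by
      rcases mul_eq_zero.mp h0 with h | h
      · exact absurd h hkI.ne'
      · exact h
    simpa [mulVec, dotProduct] using this
  -- consensus
  have hcons : ∀ i j, z t i = z t j := by
    intro i j
    funext k
    have := (G.lapMatrix_mulVec_eq_zero_iff_forall_reachable (x := fun j => z t j k)).mp
      (hL k) i j (hG.preconnected i j)
    exact this
  refine ⟨hcons, ?_⟩
  -- Dᵀ z = 0, hence μ̇ = 0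
  have hDz : ∀ (k : Fin n), Dᵀ *ᵥ (fun j => z t j k) = 0 := by
    intro k
    apply quadAux
    rw [hD]
    exact hL k
  rw [hμdyn t]
  funext e k
  have := congrFun (hDz k) e
  simp only [mulVec, dotProduct, transpose_apply, Pi.zero_apply] at this
  simp [this]
end

section
/- Every equilibrium of the PI distributed-optimization dynamics is a global minimum of the constrained problem: if z* : V → (Fin n → ℝ) and μ* : E → (Fin n → ℝ) satisfy k_G ∇f(z*) + k_P (L z*) + k_I' (D μ*) = 0 and Dᵀ z* = 0, then z* is a consensus state and f(z*) ≤ f(z) for every consensus state z : V → (Fin n → ℝ). -/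
open Matrix

lemma convex_fderiv_le {F : Type*} [NormedAddCommGroup F] [NormedSpace ℝ F]
    (f : F → ℝ) (hconv : ConvexOn ℝ Set.univ f) (hdiff : Differentiable ℝ f)
    (x y : F) : f x + fderiv ℝ f x (y - x) ≤ f y := by
  set g : ℝ → ℝ := fun t => f (t • (y - x) + x) with hgdef
  have hline : HasDerivAt (fun t : ℝ => t • (y - x) + x) (y - x) 0 := by
    simpa using ((hasDerivAt_id (0:ℝ)).smul_const (y - x)).add_const x
  have hg : HasDerivAt g (fderiv ℝ f x (y - x)) 0 := by
    have h := (hdiff ((0:ℝ) • (y - x) + x)).hasFDerivAt.comp_hasDerivAt 0 hline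
    simpa [hgdef, Function.comp_def] using h
  have hgc : ConvexOn ℝ Set.univ g := by
    have h := hconv.comp_affineMap (AffineMap.lineMap x y : ℝ →ᵃ[ℝ] F)
    have : (AffineMap.lineMap x y : ℝ →ᵃ[ℝ] F) ⁻¹' Set.univ = Set.univ := by simp
    rw [this] at h
    have he : g = f ∘ (AffineMap.lineMap x y : ℝ →ᵃ[ℝ] F) := by
      funext t; simp [hgdef, AffineMap.lineMap_apply]
    rw [he]; exact h
  have := hgc.le_slope_of_hasDerivAt (Set.mem_univ 0) (Set.mem_univ 1) zero_lt_one hg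
  rw [slope_def_field] at this
  simp [hgdef] at this
  rw [map_sub]
  linarith

/-- Every equilibrium of the PI distributed-optimization dynamics is a
global minimum of the consensus-constrained problem: if
`k_G ∇f(z*) + k_P (L z*) + k_I' (D μ*) = 0` and `Dᵀ z* = 0`, then `z*` is a consensus
state and `f(z*) ≤ f(z)` for every consensus state `z`. -/
theorem pi_distributed_equilibrium_is_global_min
    {V E : Type*} [Fintype V] [Fintype E] [Nonempty V] [Nonempty E] [DecidableEq V]
    (G : SimpleGraph V) [DecidableRel G.Adj] (hG : G.Connected)
    (D : Matrix V E ℝ) (hD : D * Dᵀ = G.lapMatrix ℝ)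
    (n : ℕ) (hn : 1 ≤ n)
    (f : (V → Fin n → ℝ) → ℝ)
    (hconv : ConvexOn ℝ Set.univ f) (hdiff : Differentiable ℝ f)
    (gradf : (V → Fin n → ℝ) → (V → Fin n → ℝ))
    (hgrad : ∀ x u, fderiv ℝ f x u = ∑ i, ∑ k, gradf x i k * u i k)
    (kG kP kI : ℝ) (hkG : 0 < kG) (hkP : 0 < kP) (hkI : 0 < kI)
    (zs : V → Fin n → ℝ) (μs : E → Fin n → ℝ)
    (hstat : (fun i k => kG * gradf zs i k + kP * (∑ j, G.lapMatrix ℝ i j * zs j k)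
      + kI * ∑ e, D i e * μs e k) = (0 : V → Fin n → ℝ))
    (hcons : (fun e k => ∑ i, D i e * zs i k) = (0 : E → Fin n → ℝ)) :
    (∀ i j, zs i = zs j) ∧
    ∀ z : V → Fin n → ℝ, (∀ i j, z i = z j) → f zs ≤ f z := by
  obtain ⟨i₀⟩ := ‹Nonempty V›
  -- zs is a consensus state
  have hzs : ∀ i j, zs i = zs j := by
    intro i j
    funext k
    set x : V → ℝ := fun i => zs i k with hxdef
    have hDx : Dᵀ *ᵥ x = 0 := by
      funext e
      have := congrFun (congrFun hcons e) k
      simpa [mulVec, dotProduct, transpose_apply, hxdef] using this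
    have hLx : Matrix.toLin' (G.lapMatrix ℝ) x = 0 := by
      rw [toLin'_apply, ← hD, ← mulVec_mulVec, hDx, mulVec_zero]
    exact (G.lapMatrix_mulVec_eq_zero_iff_forall_reachable (x := x)).mp
      (by rwa [toLin'_apply] at hLx) i j (hG i j)
  -- row sums of the Laplacian are zero
  have hrow : ∀ i : V, ∑ j, G.lapMatrix ℝ i j = 0 := by
    intro i
    have := congrFun (G.lapMatrix_mulVec_const_eq_zero (R := ℝ)) i
    simpa [mulVec, dotProduct] using this
  -- column sums of D are zero
  have hcol : ∀ e, ∑ i, D i e = 0 := by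
    have hsum : ∑ e, (∑ i, D i e) ^ 2 = 0 := by
      have h1 : ∀ e, (∑ i, D i e) ^ 2 = ∑ i, ∑ j, D i e * D j e := by
        intro e; rw [sq, Finset.sum_mul_sum]
      calc ∑ e, (∑ i, D i e) ^ 2 = ∑ e, ∑ i, ∑ j, D i e * D j e := by
            exact Finset.sum_congr rfl fun e _ => h1 e
        _ = ∑ i, ∑ e, ∑ j, D i e * D j e := Finset.sum_comm
        _ = ∑ i, ∑ j, ∑ e, D i e * D j e := by
            exact Finset.sum_congr rfl fun i _ => Finset.sum_comm
        _ = ∑ i, ∑ j, (D * Dᵀ) i j := by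
            refine Finset.sum_congr rfl fun i _ => Finset.sum_congr rfl fun j _ => ?_
            simp [Matrix.mul_apply, transpose_apply]
        _ = ∑ i, ∑ j, G.lapMatrix ℝ i j := by rw [hD]
        _ = 0 := by simp [hrow]
    intro e
    have := (Finset.sum_eq_zero_iff_of_nonneg (fun e _ => sq_nonneg (∑ i, D i e))).mp hsum e
      (Finset.mem_univ e)
    exact (pow_eq_zero_iff two_ne_zero).mp this
  -- the stationarity condition with the Laplacian term vanishing
  have hstat' : ∀ i k, kG * gradf zs i k = -kI * ∑ e, D i e * μs e k := by
    intro i k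
    have h := congrFun (congrFun hstat i) k
    have hS : ∑ j, G.lapMatrix ℝ i j * zs j k = 0 := by
      have hc : ∀ j, zs j k = zs i₀ k := fun j => congrFun (hzs j i₀) k
      calc ∑ j, G.lapMatrix ℝ i j * zs j k = (∑ j, G.lapMatrix ℝ i j) * zs i₀ k := by
            rw [Finset.sum_mul]
            exact Finset.sum_congr rfl fun j _ => by rw [hc j]
        _ = 0 := by rw [hrow]; ring
    rw [hS] at h
    simp only [Pi.zero_apply] at h
    linarith
  -- gradient paired with any consensus direction is zero
  have hzero : ∀ w : V → Fin n → ℝ, (∀ i, w i = w i₀) →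
      ∑ i, ∑ k, gradf zs i k * w i k = 0 := by
    intro w hw
    have hmain : kG * ∑ i, ∑ k, gradf zs i k * w i k = 0 := by
      have step1 : kG * ∑ i, ∑ k, gradf zs i k * w i k
          = ∑ i, ∑ k, (kG * gradf zs i k) * w i k := by
        rw [Finset.mul_sum]
        refine Finset.sum_congr rfl fun i _ => ?_
        rw [Finset.mul_sum]
        exact Finset.sum_congr rfl fun k _ => by ring
      rw [step1]
      have step2 : ∀ i k, (kG * gradf zs i k) * w i k
          = ∑ e, (-kI) * (D i e * (μs e k * w i₀ k)) := by
        intro i k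
        rw [hstat' i k, congrFun (hw i) k, Finset.mul_sum, Finset.sum_mul]
        exact Finset.sum_congr rfl fun e _ => by ring
      calc ∑ i, ∑ k, (kG * gradf zs i k) * w i k
          = ∑ i, ∑ k, ∑ e, (-kI) * (D i e * (μs e k * w i₀ k)) := by
            exact Finset.sum_congr rfl fun i _ => Finset.sum_congr rfl fun k _ => step2 i k
        _ = ∑ k, ∑ i, ∑ e, (-kI) * (D i e * (μs e k * w i₀ k)) := Finset.sum_comm
        _ = ∑ k, ∑ e, ∑ i, (-kI) * (D i e * (μs e k * w i₀ k)) := by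
            exact Finset.sum_congr rfl fun k _ => Finset.sum_comm
        _ = 0 := by
            refine Finset.sum_eq_zero fun k _ => Finset.sum_eq_zero fun e _ => ?_
            have h2 : ∀ i, (-kI) * (D i e * (μs e k * w i₀ k))
                = D i e * ((-kI) * (μs e k * w i₀ k)) := fun i => by ring
            simp_rw [h2, ← Finset.sum_mul, hcol e, zero_mul]
    have := mul_eq_zero.mp hmain
    rcases this with h | h
    · exact absurd h (ne_of_gt hkG)
    · exact h
  refine ⟨hzs, fun z hz => ?_⟩
  have h := convex_fderiv_le f hconv hdiff zs z
  rw [hgrad] at h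
  have hdir : ∀ i, (z - zs) i = (z - zs) i₀ := by
    intro i; funext k
    simp [Pi.sub_apply, congrFun (hz i i₀) k, congrFun (hzs i i₀) k]
  have hz0 : ∑ i, ∑ k, gradf zs i k * (z - zs) i k = 0 := hzero (z - zs) hdir
  rw [hz0] at h
  linarith
end

section
/- Transfer of Lagrange multipliers to a spanning tree: let G and T be connected simple graphs on the same nonempty finite vertex type V, and let D : Matrix V E ℝ and D_T : Matrix V E_T ℝ satisfy D * Dᵀ = G.lapMatrix ℝ and D_T * D_Tᵀ = T.lapMatrix ℝ. Then for every λ : E → ℝ there exists λ_T : E_T → ℝ such that D *ᵥ λ = D_T *ᵥ λ_T; i.e., the column space of D is contained in the column space of D_T (in fact the two column spaces coincide). -/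
open Matrix

section aux

variable {V : Type*} [Fintype V] [Nonempty V] [DecidableEq V]

/-- The linear functional summing the coordinates. -/
noncomputable def sumFunctional (V : Type*) [Fintype V] : (V → ℝ) →ₗ[ℝ] ℝ where
  toFun x := ∑ v, x v
  map_add' x y := by simp [Finset.sum_add_distrib]
  map_smul' c x := by simp [Finset.mul_sum]

lemma sumFunctional_surjective (V : Type*) [Fintype V] [Nonempty V] [DecidableEq V] :
    Function.Surjective (sumFunctional V) := by
  intro c
  refine ⟨Pi.single (Classical.arbitrary V) c, ?_⟩
  simp [sumFunctional, Finset.sum_pi_single]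

lemma finrank_ker_sumFunctional :
    Module.finrank ℝ (LinearMap.ker (sumFunctional V)) = Fintype.card V - 1 := by
  have h := (sumFunctional V).finrank_range_add_finrank_ker
  rw [LinearMap.range_eq_top.mpr (sumFunctional_surjective V)] at h
  simp only [finrank_top, Module.finrank_self, Module.finrank_pi] at h
  omega

lemma ker_lap_eq_span (T : SimpleGraph V) [DecidableRel T.Adj] (hT : T.Connected) :
    LinearMap.ker (T.lapMatrix ℝ).mulVecLin = Submodule.span ℝ {(fun _ => 1 : V → ℝ)} := by
  ext x
  rw [LinearMap.mem_ker, mulVecLin_apply, Submodule.mem_span_singleton]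
  constructor
  · intro hx
    have h : ∀ i j : V, T.Reachable i j → x i = x j := by
      rw [← T.lapMatrix_mulVec_eq_zero_iff_forall_reachable]
      exact hx
    refine ⟨x (Classical.arbitrary V), ?_⟩
    funext v
    simp [h v (Classical.arbitrary V) (hT.preconnected v _)]
  · rintro ⟨c, rfl⟩
    simp [mulVec_smul, T.lapMatrix_mulVec_const_eq_zero]

lemma range_lap_eq (T : SimpleGraph V) [DecidableRel T.Adj] (hT : T.Connected) :
    LinearMap.range (T.lapMatrix ℝ).mulVecLin = LinearMap.ker (sumFunctional V) := by
  have hle : LinearMap.range (T.lapMatrix ℝ).mulVecLin ≤ LinearMap.ker (sumFunctional V) := by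
    rintro _ ⟨x, rfl⟩
    simp only [LinearMap.mem_ker, mulVecLin_apply, sumFunctional, LinearMap.coe_mk,
      AddHom.coe_mk]
    have : ∑ v, ((T.lapMatrix ℝ) *ᵥ x) v = dotProduct (fun _ => 1) ((T.lapMatrix ℝ) *ᵥ x) := by
      simp [dotProduct]
    have h1 : (fun _ => (1:ℝ)) ᵥ* (T.lapMatrix ℝ) = 0 := by
      rw [← mulVec_transpose, (T.isSymm_lapMatrix (R := ℝ)).eq, T.lapMatrix_mulVec_const_eq_zero]
    rw [this, dotProduct_mulVec, h1, zero_dotProduct]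
  apply Submodule.eq_of_le_of_finrank_eq hle
  have h := (T.lapMatrix ℝ).mulVecLin.finrank_range_add_finrank_ker
  rw [ker_lap_eq_span T hT, finrank_span_singleton (by
    intro h0
    have := congrFun h0 (Classical.arbitrary V)
    simp at this)] at h
  rw [finrank_ker_sumFunctional]
  simp only [Module.finrank_pi] at h
  omega

end aux

/-- Transfer of Lagrange multipliers to a spanning tree: for
connected simple graphs `G` and `T` on the same vertex type with
`D * Dᵀ = G.lapMatrix ℝ` and `D_T * D_Tᵀ = T.lapMatrix ℝ`, for every `λ : E → ℝ`
there exists `λ_T : E_T → ℝ` with `D *ᵥ λ = D_T *ᵥ λ_T`; i.e. the column space of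
`D` is contained in the column space of `D_T` (in fact they coincide). -/
theorem lagrange_multiplier_transfer_to_tree
    {V E E_T : Type*} [Fintype V] [Fintype E] [Fintype E_T]
    [Nonempty V] [Nonempty E] [Nonempty E_T] [DecidableEq V]
    (G : SimpleGraph V) [DecidableRel G.Adj] (hG : G.Connected)
    (T : SimpleGraph V) [DecidableRel T.Adj] (hT : T.Connected)
    (D : Matrix V E ℝ) (hD : D * Dᵀ = G.lapMatrix ℝ)
    (D_T : Matrix V E_T ℝ) (hDT : D_T * D_Tᵀ = T.lapMatrix ℝ) :
    ∀ lam : E → ℝ, ∃ lamT : E_T → ℝ, D *ᵥ lam = D_T *ᵥ lamT := by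
  intro lam
  -- Step 1: `Dᵀ *ᵥ 1 = 0`.
  have hDt1 : Dᵀ *ᵥ (fun _ => (1:ℝ)) = 0 := by
    have h0 : dotProduct (Dᵀ *ᵥ (fun _ => (1:ℝ))) (Dᵀ *ᵥ (fun _ => (1:ℝ))) = 0 := by
      calc dotProduct (Dᵀ *ᵥ (fun _ => (1:ℝ))) (Dᵀ *ᵥ (fun _ => (1:ℝ)))
          = dotProduct (fun _ => (1:ℝ)) (D *ᵥ (Dᵀ *ᵥ (fun _ => (1:ℝ)))) := by
            rw [dotProduct_mulVec, vecMul_transpose, dotProduct_comm]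
        _ = dotProduct (fun _ => (1:ℝ)) ((G.lapMatrix ℝ) *ᵥ (fun _ => (1:ℝ))) := by
            rw [mulVec_mulVec, hD]
        _ = 0 := by rw [G.lapMatrix_mulVec_const_eq_zero, dotProduct_zero]
    exact dotProduct_self_eq_zero.mp h0
  -- Step 2: `D *ᵥ lam` has coordinate sum zero.
  have hmem : D *ᵥ lam ∈ LinearMap.ker (sumFunctional V) := by
    simp only [LinearMap.mem_ker, sumFunctional, LinearMap.coe_mk, AddHom.coe_mk]
    have : ∑ v, (D *ᵥ lam) v = dotProduct (fun _ => 1) (D *ᵥ lam) := by simp [dotProduct]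
    rw [this, dotProduct_mulVec, ← mulVec_transpose, hDt1, zero_dotProduct]
  -- Step 3: the sum-zero space is the range of `T.lapMatrix`.
  rw [← range_lap_eq T hT] at hmem
  obtain ⟨x, hx⟩ := hmem
  refine ⟨D_Tᵀ *ᵥ x, ?_⟩
  rw [mulVec_mulVec, hDT]
  rw [mulVecLin_apply] at hx
  exact hx.symm
end

section
/- Scalable (coordinate-wise) version of the PI optimality theorem: suppose for each coordinate k ∈ Fin n we have a connected simple graph G_k on a nonempty finite vertex type V_k with Laplacian L_k, and a matrix D_k : Matrix V_k E_k ℝ with D_k * D_kᵀ = L_k. Let f : (Π k, (V_k → ℝ)) → ℝ be convex and differentiable, with gradient ∇f. If z* : Π k, (V_k → ℝ) and μ* : Π k, (E_k → ℝ) satisfy, for every k, k_G · (∇f(z*)) k + k_P · (L_k *ᵥ z* k) + k_I' · (D_k *ᵥ μ* k) = 0 and D_kᵀ *ᵥ z* k = 0, then each z* k is a constant function on V_k, and f(z*) ≤ f(z) for every z : Π k, (V_k → ℝ) such that each z k is a constant function on V_k. -/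
open Matrix

/-- Scalable (coordinate-wise) version of the PI optimality theorem:
for each coordinate `k` there is a connected simple graph `G k` on a nonempty finite
vertex type `V k` with Laplacian `L k` and a matrix `D k` with `D k * (D k)ᵀ = L k`.
If `z*` and `μ*` satisfy, for every `k`,
`k_G · (∇f(z*)) k + k_P · (L k *ᵥ z* k) + k_I' · (D k *ᵥ μ* k) = 0` and
`(D k)ᵀ *ᵥ z* k = 0`, then each `z* k` is constant on `V k` and `f(z*) ≤ f(z)` for
every `z` with each `z k` constant on `V k`. -/
theorem scalable_pi_equilibrium_is_global_min
    (n : ℕ) (hn : 1 ≤ n)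
    (V : Fin n → Type*) (E : Fin n → Type*)
    [∀ k, Fintype (V k)] [∀ k, Fintype (E k)]
    [∀ k, Nonempty (V k)] [∀ k, Nonempty (E k)] [∀ k, DecidableEq (V k)]
    (G : ∀ k, SimpleGraph (V k)) [∀ k, DecidableRel (G k).Adj]
    (hG : ∀ k, (G k).Connected)
    (D : ∀ k, Matrix (V k) (E k) ℝ)
    (hD : ∀ k, D k * (D k)ᵀ = (G k).lapMatrix ℝ)
    (f : (∀ k, V k → ℝ) → ℝ)
    (hconv : ConvexOn ℝ Set.univ f) (hdiff : Differentiable ℝ f)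
    (gradf : (∀ k, V k → ℝ) → (∀ k, V k → ℝ))
    (hgrad : ∀ x u, fderiv ℝ f x u = ∑ k, ∑ i, gradf x k i * u k i)
    (kG kP kI : ℝ) (hkG : 0 < kG) (hkP : 0 < kP) (hkI : 0 < kI)
    (zs : ∀ k, V k → ℝ) (μs : ∀ k, E k → ℝ)
    (hstat : ∀ k, (fun i => kG * gradf zs k i
      + kP * ((G k).lapMatrix ℝ *ᵥ zs k) i + kI * (D k *ᵥ μs k) i)
      = (0 : V k → ℝ))
    (hcons : ∀ k, (D k)ᵀ *ᵥ zs k = 0) :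
    (∀ k, ∀ i j, zs k i = zs k j) ∧
    ∀ z : ∀ k, V k → ℝ, (∀ k, ∀ i j, z k i = z k j) → f zs ≤ f z := by
  classical
  -- L *ᵥ zs k = 0
  have hLz : ∀ k, (G k).lapMatrix ℝ *ᵥ zs k = 0 := by
    intro k
    rw [← hD k, ← mulVec_mulVec, hcons k, mulVec_zero]
  -- Dᵀ kills constant vectors
  have hD1 : ∀ k, (D k)ᵀ *ᵥ (fun _ => (1 : ℝ)) = 0 := by
    intro k
    have hL1 : (G k).lapMatrix ℝ *ᵥ (fun _ => (1 : ℝ)) = 0 :=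
      SimpleGraph.lapMatrix_mulVec_const_eq_zero (G k)
    rw [← hD k, ← mulVec_mulVec] at hL1
    have hdot : ((D k)ᵀ *ᵥ fun _ => (1:ℝ)) ⬝ᵥ ((D k)ᵀ *ᵥ fun _ => (1:ℝ)) = 0 := by
      nth_rewrite 1 [mulVec_transpose]
      rw [← dotProduct_mulVec, hL1, dotProduct_zero]
    rwa [dotProduct_self_eq_zero] at hdot
  -- each zs k is constant
  have hconst : ∀ k, ∀ i j, zs k i = zs k j := by
    intro k i j
    have h0 : Matrix.toLin' ((G k).lapMatrix ℝ) (zs k) = 0 := by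
      rw [Matrix.toLin'_apply, hLz k]
    exact (((G k).lapMatrix_mulVec_eq_zero_iff_forall_reachable (x := zs k)).mp (by rwa [Matrix.toLin'_apply] at h0)) i j
      ((hG k).preconnected i j)
  refine ⟨hconst, ?_⟩
  intro z hz
  -- gradient at zs
  have hgradval : ∀ k i, gradf zs k i = -(kI / kG) * (D k *ᵥ μs k) i := by
    intro k i
    have h := congrFun (hstat k) i
    rw [hLz k] at h
    simp only [Pi.zero_apply, mul_zero, add_zero] at h
    field_simp
    linarith [h]
  -- the directional derivative vanishes
  have hderiv0 : fderiv ℝ f zs (z - zs) = 0 := by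
    rw [hgrad zs (z - zs)]
    have : ∀ k, ∑ i, gradf zs k i * (z - zs) k i = 0 := by
      intro k
      have hsum : ∑ i, gradf zs k i * (z - zs) k i
          = -(kI / kG) * ((D k *ᵥ μs k) ⬝ᵥ ((z : ∀ k, V k → ℝ) - zs) k) := by
        simp only [dotProduct, Finset.mul_sum]
        exact Finset.sum_congr rfl fun i _ => by rw [hgradval k i]; ring
      have hDz : (D k)ᵀ *ᵥ z k = 0 := by
        obtain ⟨j⟩ := ‹∀ k, Nonempty (V k)› k
        have hzk : z k = (z k j) • (fun _ => (1:ℝ)) := by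
          funext i; simp [hz k i j]
        rw [hzk, mulVec_smul, hD1 k, smul_zero]
      have hdw : (D k *ᵥ μs k) ⬝ᵥ ((z : ∀ k, V k → ℝ) - zs) k = 0 := by
        rw [dotProduct_comm, dotProduct_mulVec, ← mulVec_transpose]
        have : (D k)ᵀ *ᵥ ((z : ∀ k, V k → ℝ) - zs) k = 0 := by
          have : ((z : ∀ k, V k → ℝ) - zs) k = z k - zs k := rfl
          rw [this, mulVec_sub, hDz, hcons k, sub_zero]
        rw [this, zero_dotProduct]
      rw [hsum, hdw, mul_zero]
    exact Finset.sum_eq_zero fun k _ => by simpa [Pi.sub_apply] using this k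
  -- convexity along the segment
  set g : ℝ → ℝ := fun t => f (zs + t • (z - zs)) with hgdef
  have hgconv : ConvexOn ℝ Set.univ g := by
    have := hconv.comp_affineMap
      (AffineMap.lineMap (k := ℝ) zs z : ℝ →ᵃ[ℝ] (∀ k, V k → ℝ))
    have heq : (f ∘ (AffineMap.lineMap (k := ℝ) zs z : ℝ →ᵃ[ℝ] (∀ k, V k → ℝ))) = g := by
      funext t
      simp [hgdef, AffineMap.lineMap_apply, add_comm]
    rw [heq] at this
    simpa using this
  have hline : HasDerivAt (fun t : ℝ => zs + t • (z - zs)) (z - zs) 0 := by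
    have h1 : HasDerivAt (fun t : ℝ => t • (z - zs)) ((1:ℝ) • (z - zs)) 0 :=
      (hasDerivAt_id 0).smul_const (z - zs)
    simpa using h1.const_add zs
  have hg' : HasDerivAt g (fderiv ℝ f zs (z - zs)) 0 := by
    have hF : HasFDerivAt f (fderiv ℝ f zs) ((fun t : ℝ => zs + t • (z - zs)) 0) := by
      simpa using (hdiff zs).hasFDerivAt
    exact hF.comp_hasDerivAt 0 hline
  have hslope := hgconv.le_slope_of_hasDerivAt (Set.mem_univ 0) (Set.mem_univ 1)
    one_pos hg'
  rw [hderiv0] at hslope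
  have hg0 : g 0 = f zs := by simp [hgdef]
  have hg1 : g 1 = f z := by simp [hgdef]
  rw [slope_def_field, hg0, hg1] at hslope
  simp at hslope
  linarith
end
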